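/- Let γ ∈ (0,1], C > 0 and T ≥ 0. Then the series ∑_{k=1}^∞ C^k (∏_{l=1}^{k-1} B(lγ/2, γ/2)) · T^{kγ/2} converges (where the empty product equals 1). -/

import Mathlib

open MeasureTheory

/-- The Euler Beta function `B(a,b) = ∫₀¹ u^{a-1}(1-u)^{b-1} du`. -/
noncomputable def Beta (a b : ℝ) : ℝ :=
  ∫ u in (0:ℝ)..1, u ^ (a - 1) * (1 - u) ^ (b - 1)

lemma Beta_eq_Gamma {a b : ℝ} (ha : 0 < a) (hb : 0 < b) :
    Beta a b = Real.Gamma a * Real.Gamma b / Real.Gamma (a + b) := by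
  have key := Complex.Gamma_mul_Gamma_eq_betaIntegral (s := (a : ℂ)) (t := (b : ℂ))
    (by simpa using ha) (by simpa using hb)
  have hbeta : Complex.betaIntegral (a : ℂ) (b : ℂ) = (Beta a b : ℂ) := by
    unfold Complex.betaIntegral Beta
    rw [← intervalIntegral.integral_ofReal]
    refine intervalIntegral.integral_congr fun x hx => ?_
    rw [Set.uIcc_of_le (by norm_num : (0:ℝ) ≤ 1)] at hx
    rw [Complex.ofReal_mul, Complex.ofReal_cpow hx.1 (a - 1),
      Complex.ofReal_cpow (by linarith [hx.2] : (0:ℝ) ≤ 1 - x) (b - 1)]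
    push_cast
    ring
  rw [hbeta, ← Complex.ofReal_add, Complex.Gamma_ofReal, Complex.Gamma_ofReal,
    Complex.Gamma_ofReal, ← Complex.ofReal_mul, ← Complex.ofReal_mul] at key
  have hreal : Real.Gamma a * Real.Gamma b = Real.Gamma (a + b) * Beta a b := by
    exact_mod_cast key
  have hpos : 0 < Real.Gamma (a + b) := Real.Gamma_pos_of_pos (by linarith)
  field_simp [hreal]
  rw [hreal]; ring

lemma Gamma_ratio {s c : ℝ} (hs : 2 ≤ s) (hc : 0 < c) :
    Real.Gamma s * (s - 1) ^ c ≤ Real.Gamma (s + c) := by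
  have h1 : (0:ℝ) < s - 1 := by linarith
  have hΓs : 0 < Real.Gamma s := Real.Gamma_pos_of_pos (by linarith)
  have hΓ1 : 0 < Real.Gamma (s - 1) := Real.Gamma_pos_of_pos h1
  have hΓc : 0 < Real.Gamma (s + c) := Real.Gamma_pos_of_pos (by linarith)
  have hrec : Real.Gamma s = (s - 1) * Real.Gamma (s - 1) := by
    have := Real.Gamma_add_one (ne_of_gt h1)
    rw [sub_add_cancel] at this
    exact this
  have hslope := Real.convexOn_log_Gamma.slope_mono_adjacent
    (x := s - 1) (y := s) (z := s + c)
    (by simpa using h1) (by simp; linarith) (by linarith) (by linarith)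
  simp only [Function.comp] at hslope
  have e1 : s - (s - 1) = 1 := by ring
  have e2 : s + c - s = c := by ring
  rw [e1, e2, div_one] at hslope
  have hlog : Real.log (Real.Gamma s) - Real.log (Real.Gamma (s - 1)) = Real.log (s - 1) := by
    rw [hrec, Real.log_mul (ne_of_gt h1) (ne_of_gt hΓ1)]
    ring
  rw [hlog] at hslope
  have h2 : c * Real.log (s - 1) ≤ Real.log (Real.Gamma (s + c)) - Real.log (Real.Gamma s) := by
    rw [mul_comm]
    exact (le_div_iff₀ hc).mp hslope
  rw [← Real.log_le_log_iff (by positivity) hΓc, Real.log_mul (ne_of_gt hΓs) (by positivity),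
    Real.log_rpow h1]
  linarith

lemma prod_Beta_eq (γ : ℝ) (hγ0 : 0 < γ) (k : ℕ) :
    (∏ l ∈ Finset.Icc 1 k, Beta ((l : ℝ) * γ / 2) (γ / 2)) =
      Real.Gamma (γ / 2) ^ (k + 1) / Real.Gamma (((k : ℝ) + 1) * γ / 2) := by
  have hγ2 : 0 < γ / 2 := by linarith
  induction k with
  | zero =>
    simp only [Finset.Icc_eq_empty_of_lt (by norm_num : (0:ℕ) < 1), Finset.prod_empty,
      Nat.cast_zero, zero_add, one_mul, pow_one]
    exact (div_self (ne_of_gt (Real.Gamma_pos_of_pos hγ2))).symm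
  | succ k ih =>
    rw [Finset.prod_Icc_succ_top (by omega : 1 ≤ k + 1), ih]
    have hk1 : (0:ℝ) < ((k:ℝ) + 1) * γ / 2 := by positivity
    rw [Beta_eq_Gamma (by push_cast; positivity) hγ2]
    have harg : ((k:ℝ) + 1) * γ / 2 + γ / 2 = (((k:ℕ):ℝ) + 1 + 1) * γ / 2 := by ring
    have hΓ1 : 0 < Real.Gamma (((k:ℝ) + 1) * γ / 2) := Real.Gamma_pos_of_pos hk1
    have hΓ2 : 0 < Real.Gamma ((((k:ℕ):ℝ) + 1 + 1) * γ / 2) :=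
      Real.Gamma_pos_of_pos (by positivity)
    push_cast
    rw [harg]
    push_cast
    field_simp
    ring

/-- The parametrix series `∑_{k≥1} C^k (∏_{l=1}^{k-1} B(lγ/2, γ/2)) T^{kγ/2}` converges. -/
theorem parametrix_series_summable (γ C T : ℝ)
    (hγ : γ ∈ Set.Ioc (0:ℝ) 1) (hC : 0 < C) (hT : 0 ≤ T) :
    Summable (fun k : ℕ =>
      C ^ (k + 1) * (∏ l ∈ Finset.Icc 1 k, Beta ((l : ℝ) * γ / 2) (γ / 2)) *
        T ^ (((k : ℝ) + 1) * γ / 2)) := by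
  obtain ⟨hγ0, hγ1⟩ := hγ
  have hγ2 : 0 < γ / 2 := by linarith
  rcases eq_or_lt_of_le hT with hT0 | hT0
  · have : (fun k : ℕ =>
        C ^ (k + 1) * (∏ l ∈ Finset.Icc 1 k, Beta ((l : ℝ) * γ / 2) (γ / 2)) *
          T ^ (((k : ℝ) + 1) * γ / 2)) = fun _ => 0 := by
      funext k
      rw [← hT0, Real.zero_rpow (by positivity)]
      ring
    rw [this]
    exact summable_zero
  -- T > 0 case
  set x : ℝ := C * Real.Gamma (γ / 2) * T ^ (γ / 2 : ℝ) with hx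
  have hΓγ : 0 < Real.Gamma (γ / 2) := Real.Gamma_pos_of_pos hγ2
  have hx0 : 0 < x := by positivity
  have hterm : ∀ k : ℕ,
      C ^ (k + 1) * (∏ l ∈ Finset.Icc 1 k, Beta ((l : ℝ) * γ / 2) (γ / 2)) *
        T ^ (((k : ℝ) + 1) * γ / 2)
      = x ^ (k + 1) / Real.Gamma (((k : ℝ) + 1) * γ / 2) := by
    intro k
    rw [prod_Beta_eq γ hγ0 k]
    have hTpow : T ^ (((k : ℝ) + 1) * γ / 2) = (T ^ (γ / 2 : ℝ)) ^ (k + 1) := by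
      rw [← Real.rpow_natCast (T ^ (γ / 2 : ℝ)) (k + 1), ← Real.rpow_mul hT]
      congr 1
      push_cast
      ring
    rw [hTpow, hx]
    rw [mul_pow, mul_pow]
    ring
  rw [funext hterm]
  -- ratio test
  refine summable_of_ratio_norm_eventually_le (r := 1/2) (by norm_num) ?_
  set M : ℝ := max 2 (1 + (2 * x) ^ (2 / γ : ℝ)) with hM
  obtain ⟨K, hK⟩ := exists_nat_ge (M * 2 / γ)
  rw [Filter.eventually_atTop]
  refine ⟨K, fun k hk => ?_⟩
  set s : ℝ := ((k : ℝ) + 1) * γ / 2 with hs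
  have hsM : M ≤ s := by
    have h1 : M * 2 / γ ≤ (k : ℝ) := le_trans hK (by exact_mod_cast hk)
    rw [div_le_iff₀ hγ0] at h1
    rw [hs]
    nlinarith
  have hs2 : 2 ≤ s := le_trans (le_max_left _ _) hsM
  have hsx : (2 * x) ^ (2 / γ : ℝ) ≤ s - 1 := by
    have := le_trans (le_max_right _ _) hsM
    linarith
  have hΓs : 0 < Real.Gamma s := Real.Gamma_pos_of_pos (by linarith)
  have hΓsc : 0 < Real.Gamma (s + γ / 2) := Real.Gamma_pos_of_pos (by linarith)
  -- (s-1)^(γ/2) ≥ 2x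
  have hrpow : 2 * x ≤ (s - 1) ^ (γ / 2 : ℝ) := by
    have h2x : (0:ℝ) ≤ 2 * x := by positivity
    have h1 : ((2 * x) ^ (2 / γ : ℝ)) ^ (γ / 2 : ℝ) ≤ (s - 1) ^ (γ / 2 : ℝ) :=
      Real.rpow_le_rpow (Real.rpow_nonneg h2x _) hsx (le_of_lt hγ2)
    rwa [← Real.rpow_mul h2x, (by field_simp : (2 / γ) * (γ / 2) = (1:ℝ)),
      Real.rpow_one] at h1
  have hΓineq : Real.Gamma s * (2 * x) ≤ Real.Gamma (s + γ / 2) := by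
    calc Real.Gamma s * (2 * x) ≤ Real.Gamma s * (s - 1) ^ (γ / 2 : ℝ) := by
          exact mul_le_mul_of_nonneg_left hrpow (le_of_lt hΓs)
      _ ≤ Real.Gamma (s + γ / 2) := Gamma_ratio hs2 hγ2
  -- the argument of Gamma at k+1
  have harg : ((((k + 1 : ℕ)) : ℝ) + 1) * γ / 2 = s + γ / 2 := by
    push_cast
    rw [hs]
    ring
  rw [harg]
  have hfk : (0:ℝ) < x ^ (k + 1) / Real.Gamma s := by positivity
  have hfk1 : (0:ℝ) < x ^ (k + 1 + 1) / Real.Gamma (s + γ / 2) := by positivity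
  rw [Real.norm_of_nonneg (le_of_lt hfk1), Real.norm_of_nonneg (le_of_lt hfk)]
  rw [(by ring : (1:ℝ)/2 * (x ^ (k + 1) / Real.Gamma s)
      = x ^ (k + 1) / (2 * Real.Gamma s)),
    div_le_div_iff₀ hΓsc (by positivity)]
  have hxpow : x ^ (k + 1 + 1) = x ^ (k + 1) * x := pow_succ x (k + 1)
  nlinarith [pow_pos hx0 (k + 1), mul_le_mul_of_nonneg_left hΓineq (le_of_lt (pow_pos hx0 (k + 1)))]
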